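/- Let a ∈ (1/2, 1), r ∈ (0,1), q ∈ [0,1] with q < 1/2, f(q) = qa + (1−q)(1−a). For each n let N₁⁽ⁿ⁾ ~ Binomial(n, f(q)) and q̂ₙ^LA = 1/(1 + ((1−r)/r)·(a/(1−a))^{n − 2N₁⁽ⁿ⁾}). Then q̂ₙ^LA converges in probability to 0 as n → ∞. -/
import Mathlib


open Finset Filter

set_option maxHeartbeats 1000000 in
/-- When q < 1/2, the LA posterior converges in probability to 0. -/
theorem la_posterior_tendsto_zero (a r q : ℝ) (ha : 1/2 < a) (ha1 : a < 1)
    (hr0 : 0 < r) (hr1 : r < 1) (hq0 : 0 ≤ q) (hq1 : q ≤ 1) (hq : q < 1/2) :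
    let f : ℝ := q * a + (1 - q) * (1 - a)
    ∀ ε > 0,
      Tendsto (fun n : ℕ =>
        ∑ k ∈ Finset.range (n + 1),
          if |1 / (1 + ((1 - r) / r) * (a / (1 - a)) ^ ((n : ℤ) - 2 * (k : ℤ))) - 0| > ε then
            (n.choose k : ℝ) * f ^ k * (1 - f) ^ (n - k)
          else 0) atTop (nhds 0) := by
  intro f ε hε
  have hfeq : f = q * a + (1 - q) * (1 - a) := rfl
  have hf0 : 0 < f := by
    have h1 : 0 < (1 - q) * (1 - a) := mul_pos (by linarith) (by linarith)
    have h2 : 0 ≤ q * a := mul_nonneg hq0 (by linarith)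
    rw [hfeq]; linarith
  have hf2 : f < 1/2 := by
    have := mul_pos (show (0:ℝ) < 1/2 - q by linarith) (show (0:ℝ) < a - 1/2 by linarith)
    rw [hfeq]; nlinarith
  have hf1 : 0 < 1 - f := by linarith
  set C : ℝ := (1 - r) / r with hCdef
  set R : ℝ := a / (1 - a) with hRdef
  have hC : 0 < C := div_pos (by linarith) hr0
  have hR : 1 < R := (one_lt_div (by linarith)).2 (by linarith)
  have hR0 : 0 < R := by linarith
  set t : ℝ := 1 + (1 - 2*f)/(2*f^2) with htdef
  have ht1 : 1 < t := by
    have : 0 < (1 - 2*f)/(2*f^2) := div_pos (by linarith) (by positivity)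
    rw [htdef]; linarith
  have ht0 : 0 < t := by linarith
  have hmean : f*t + (1-f) = 1/(2*f) := by
    rw [htdef]; field_simp; ring
  have hX0 : 0 < f*t + (1-f) := by nlinarith
  have hkey : (f*t + (1-f))^2 < t := by
    rw [hmean, htdef, div_pow, one_pow]
    have hpos : (0:ℝ) < (2*f)^2 := by positivity
    rw [div_lt_iff₀ hpos]
    have hexp : (1 + (1 - 2*f)/(2*f^2)) * (2*f)^2 = 4*f^2 + 2*(1 - 2*f) := by
      field_simp; ring
    rw [hexp]
    nlinarith [mul_pos (show (0:ℝ) < 1 - 2*f by linarith) (show (0:ℝ) < 1 - 2*f by linarith)]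
  set s : ℝ := (f*t + (1-f)) / Real.sqrt t with hsdef
  have hsq : 0 < Real.sqrt t := Real.sqrt_pos.2 ht0
  have hs0 : 0 ≤ s := le_of_lt (div_pos hX0 hsq)
  have hs1 : s < 1 := by
    rw [hsdef, div_lt_one hsq]
    exact (Real.lt_sqrt hX0.le).2 hkey
  set c : ℝ := |Real.log ((1-ε)/(ε*C)) / Real.log R| with hcdef
  clear_value f C R t s c
  have hsqrtpow : ∀ n : ℕ, (Real.sqrt t) ^ n = t ^ (((n:ℝ))/2) := by
    intro n
    rw [Real.sqrt_eq_rpow, ← Real.rpow_natCast (t ^ ((1:ℝ)/2)) n, ← Real.rpow_mul ht0.le]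
    congr 1; ring
  -- per-term bound
  have hterm : ∀ n k : ℕ,
      (if |1 / (1 + C * R ^ ((n : ℤ) - 2 * (k : ℤ))) - 0| > ε then
        (n.choose k : ℝ) * f ^ k * (1 - f) ^ (n - k) else 0)
      ≤ t ^ ((k:ℝ) - ((n:ℝ) - c)/2) * ((n.choose k : ℝ) * f ^ k * (1 - f) ^ (n - k)) := by
    intro n k
    have hPnn : 0 ≤ (n.choose k : ℝ) * f ^ k * (1 - f) ^ (n - k) :=
      mul_nonneg (mul_nonneg (Nat.cast_nonneg _) (pow_nonneg hf0.le _)) (pow_nonneg hf1.le _)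
    by_cases hcond : |1 / (1 + C * R ^ ((n : ℤ) - 2 * (k : ℤ))) - 0| > ε
    · rw [if_pos hcond]
      set d : ℤ := (n : ℤ) - 2 * (k : ℤ) with hddef
      have hRd : 0 < R ^ d := zpow_pos hR0 d
      have hden : 0 < 1 + C * R ^ d := by nlinarith [mul_pos hC hRd]
      rw [sub_zero, abs_of_pos (div_pos one_pos hden)] at hcond
      have h1 : ε * (1 + C * R ^ d) < 1 := (lt_div_iff₀ hden).1 hcond
      have h2 : R ^ d < (1-ε)/(ε*C) := by
        rw [lt_div_iff₀ (mul_pos hε hC)]; nlinarith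
      have h3 : (d:ℝ) * Real.log R < Real.log ((1-ε)/(ε*C)) := by
        have := Real.log_lt_log hRd h2
        rwa [Real.log_zpow] at this
      have hlogR : 0 < Real.log R := Real.log_pos hR
      have h4 : (d:ℝ) ≤ c := by
        rw [hcdef]
        exact le_trans (le_of_lt ((lt_div_iff₀ hlogR).2 h3)) (le_abs_self _)
      have h5 : (n:ℝ) - 2*(k:ℝ) ≤ c := by push_cast [hddef] at h4; linarith
      have hx : 0 ≤ (k:ℝ) - ((n:ℝ) - c)/2 := by linarith
      refine le_mul_of_one_le_left hPnn ?_
      calc (1:ℝ) = t ^ (0:ℝ) := (Real.rpow_zero t).symm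
        _ ≤ t ^ ((k:ℝ) - ((n:ℝ) - c)/2) := Real.rpow_le_rpow_of_exponent_le ht1.le hx
    · rw [if_neg hcond]
      exact mul_nonneg (Real.rpow_nonneg ht0.le _) hPnn
  -- sum bound
  have hsum : ∀ n : ℕ,
      (∑ k ∈ Finset.range (n + 1),
        if |1 / (1 + C * R ^ ((n : ℤ) - 2 * (k : ℤ))) - 0| > ε then
          (n.choose k : ℝ) * f ^ k * (1 - f) ^ (n - k) else 0)
      ≤ t ^ (c/2) * s ^ n := by
    intro n
    calc (∑ k ∈ Finset.range (n + 1),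
        if |1 / (1 + C * R ^ ((n : ℤ) - 2 * (k : ℤ))) - 0| > ε then
          (n.choose k : ℝ) * f ^ k * (1 - f) ^ (n - k) else 0)
        ≤ ∑ k ∈ Finset.range (n + 1),
            t ^ ((k:ℝ) - ((n:ℝ) - c)/2) * ((n.choose k : ℝ) * f ^ k * (1 - f) ^ (n - k)) :=
          Finset.sum_le_sum (fun k _ => hterm n k)
      _ = t ^ (-(((n:ℝ) - c)/2)) *
            ∑ k ∈ Finset.range (n + 1), (f*t) ^ k * (1 - f) ^ (n - k) * (n.choose k : ℝ) := by
          rw [Finset.mul_sum]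
          refine Finset.sum_congr rfl (fun k _ => ?_)
          rw [show (k:ℝ) - ((n:ℝ) - c)/2 = (k:ℝ) + (-(((n:ℝ) - c)/2)) by ring,
            Real.rpow_add ht0, Real.rpow_natCast]
          ring
      _ = t ^ (-(((n:ℝ) - c)/2)) * ((f*t) + (1 - f)) ^ n := by rw [← add_pow]
      _ = t ^ (c/2) * s ^ n := by
          rw [hsdef, div_pow, hsqrtpow n,
            show -(((n:ℝ) - c)/2) = c/2 + (-((n:ℝ)/2)) by ring,
            Real.rpow_add ht0, Real.rpow_neg ht0.le]
          field_simp
  -- squeeze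
  have hnn : ∀ n : ℕ, 0 ≤
      (∑ k ∈ Finset.range (n + 1),
        if |1 / (1 + C * R ^ ((n : ℤ) - 2 * (k : ℤ))) - 0| > ε then
          (n.choose k : ℝ) * f ^ k * (1 - f) ^ (n - k) else 0) := by
    intro n
    refine Finset.sum_nonneg (fun k _ => ?_)
    split
    · exact mul_nonneg (mul_nonneg (Nat.cast_nonneg _) (pow_nonneg hf0.le _))
        (pow_nonneg hf1.le _)
    · exact le_rfl
  have hgeo : Tendsto (fun n : ℕ => t ^ (c/2) * s ^ n) atTop (nhds 0) := by
    have := (tendsto_pow_atTop_nhds_zero_of_lt_one hs0 hs1).const_mul (t ^ (c/2))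
    simpa using this
  exact squeeze_zero hnn hsum hgeo
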